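/- Suppose f satisfies like-mindedness and the STP, and the communication graph G admits a strongly connected symmetric spanning subgraph. Then for any initial profile of partitions, the transfinite dialogue sequence (g^α) (iterating the update g, taking joins at limit ordinals) reaches, at some ordinal α*, a profile at which all agents' message functions coincide (a consensus); moreover |α*| ≤ n·|X|. -/

import Mathlib

/-- The block of the partition (setoid) `P` containing `x`. -/
def blk {X : Type*} (P : Setoid X) (x : X) : Set X := {y | P.r x y}

/-- The message sent at state `x` by an agent with information `P`,
given the message function `f`. -/
def msg {X A : Type*} (f : Set X → A) (P : Setoid X) (x : X) : A := f (blk P x)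

/-- The working partition of `P` induced by the message function `f`:
two states are equivalent iff the same message is sent at them. -/
def wp {X A : Type*} (f : Set X → A) (P : Setoid X) : Setoid X := Setoid.ker (msg f P)

/-- The sure thing principle: for any nonempty `S` and any partition of `S`
into nonempty blocks all mapped by `f` to `a`, `f S = a`. -/
def STPred {X A : Type*} (f : Set X → A) : Prop :=
  ∀ (S : Set X) (C : Set (Set X)) (a : A), S.Nonempty →
    (∀ B ∈ C, B.Nonempty) → C.PairwiseDisjoint id → ⋃₀ C = S →
    (∀ B ∈ C, f B = a) → f S = a

open scoped Classical in
/- The update function on profiles of partitions induced by the graph `G`: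
if `i` has senders, `i` refines her partition by joining (in the refinement
order: `⊓` in the `Setoid` order, which is the coarsest common refinement)
with the working partitions of all her senders; else her partition stays put.
Note: in the `Setoid` order, smaller = finer, so the paper's coarsening order
`P ≤ Q` ("Q refines P") is `Q ≤ P` here, the paper's join is `⊓`, and the
paper's meet is `⊔`. -/
noncomputable def update {X A I : Type*} (f : Set X → A) (G : I → I → Prop)
    (P : I → Setoid X) (i : I) : Setoid X :=
  if (∃ j, G j i) then ⨅ j ∈ {j | G j i}, (P i ⊓ wp f (P j)) else P i


section Aux
universe v
variable {X A : Type v}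

theorem blk_eq_of_rel {P : Setoid X} {x y : X} (h : P.r x y) : blk P x = blk P y := by
  ext z
  exact ⟨fun hz => P.trans' (P.symm' h) hz, fun hz => P.trans' h hz⟩

theorem msg_eq_of_rel (f : Set X → A) {P : Setoid X} {x y : X} (h : P.r x y) :
    msg f P x = msg f P y := by unfold msg; rw [blk_eq_of_rel h]

theorem le_wp_self (f : Set X → A) (P : Setoid X) : P ≤ wp f P :=
  fun _ _ h => msg_eq_of_rel f h

theorem wp_rel_iff (f : Set X → A) (P : Setoid X) (x y : X) :
    (wp f P).r x y ↔ msg f P x = msg f P y := Iff.rfl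

theorem consensus_pair [Nonempty X] (f : Set X → A) (hstp : STPred f)
    (Q R : Setoid X) (hQR : Q ≤ wp f R) (hRQ : R ≤ wp f Q) : msg f Q = msg f R := by
  funext x
  set T : Set X := blk (wp f Q) x ∩ blk (wp f R) x with hT
  have hxT : x ∈ T := ⟨(wp f Q).refl' x, (wp f R).refl' x⟩
  -- each Q-block of a point of T is inside T, similarly for R
  have key : ∀ (S : Setoid X), S ≤ wp f Q → S ≤ wp f R →
      ∀ y ∈ T, blk S y ⊆ T := by
    intro S hSQ hSR y hy z hz
    constructor
    · exact (wp f Q).trans' hy.1 (hSQ hz)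
    · exact (wp f R).trans' hy.2 (hSR hz)
  have main : ∀ (S : Setoid X), S ≤ wp f Q → S ≤ wp f R → ∀ b : A,
      (∀ y ∈ T, f (blk S y) = b) → f T = b := by
    intro S hSQ hSR b hb
    refine hstp T ((fun y => blk S y) '' T) b ⟨x, hxT⟩ ?_ ?_ ?_ ?_
    · rintro B ⟨y, -, rfl⟩; exact ⟨y, S.refl' y⟩
    · rintro B ⟨y, -, rfl⟩ B' ⟨y', -, rfl⟩ hne
      refine Set.disjoint_left.2 fun z hz hz' => hne ?_
      simp only [id] at *
      rw [blk_eq_of_rel (hz : S.r y z), blk_eq_of_rel (hz' : S.r y' z)]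
    · apply Set.Subset.antisymm
      · rintro z ⟨B, ⟨y, hy, rfl⟩, hz⟩
        exact key S hSQ hSR y hy hz
      · intro z hz
        exact ⟨blk S z, ⟨z, hz, rfl⟩, S.refl' z⟩
    · rintro B ⟨y, hy, rfl⟩; exact hb y hy
  have hfQ : f T = msg f Q x := by
    refine main Q (le_wp_self f Q) hQR (msg f Q x) ?_
    intro y hy
    have : (wp f Q).r x y := hy.1
    exact ((wp_rel_iff f Q x y).1 this).symm
  have hfR : f T = msg f R x := by
    refine main R hRQ (le_wp_self f R) (msg f R x) ?_
    intro y hy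
    exact ((wp_rel_iff f R x y).1 hy.2).symm
  rw [← hfQ, hfR]

end Aux


section Seq
universe v
variable {X A I : Type v} (f : Set X → A) (G : I → I → Prop) (P0 : I → Setoid X)

/-- The transfinite dialogue sequence. -/
noncomputable def dseq : Ordinal.{v} → (I → Setoid X) := fun α =>
  Ordinal.limitRecOn α P0 (fun _ ih => update f G ih)
    (fun l _ ih => fun i => sInf (Set.range (fun b : Set.Iio l => ih b.1 b.2 i)))

theorem dseq_zero : dseq f G P0 0 = P0 := Ordinal.limitRecOn_zero _ _ _

theorem dseq_succ (α : Ordinal.{v}) :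
    dseq f G P0 (α + 1) = update f G (dseq f G P0 α) := by
  have : α + 1 = Order.succ α := Ordinal.add_one_eq_succ α
  rw [this]
  exact Ordinal.limitRecOn_succ _ _ _ _

theorem dseq_limit {l : Ordinal.{v}} (hl : Order.IsSuccLimit l) (i : I) :
    dseq f G P0 l i = sInf ((fun β => dseq f G P0 β i) '' Set.Iio l) := by
  have := Ordinal.limitRecOn_limit l P0 (fun _ ih => update f G ih)
    (fun l _ ih => fun i => sInf (Set.range (fun b : Set.Iio l => ih b.1 b.2 i))) hl
  unfold dseq
  rw [this, Set.image_eq_range]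

theorem dseq_succ_le (α : Ordinal.{v}) (i : I) :
    dseq f G P0 (α + 1) i ≤ dseq f G P0 α i := by
  rw [dseq_succ]
  unfold update
  split_ifs with h
  · obtain ⟨j, hj⟩ := h
    exact le_trans (le_trans (iInf_le _ j) (iInf_le _ hj)) inf_le_left
  · exact le_rfl

theorem dseq_anti' (β : Ordinal.{v}) : ∀ α ≤ β, ∀ i : I,
    dseq f G P0 β i ≤ dseq f G P0 α i := by
  induction β using Ordinal.induction with
  | _ β ihβ =>
    intro α hαβ i
    rcases eq_or_lt_of_le hαβ with rfl | h
    · exact le_rfl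
    rcases Ordinal.zero_or_succ_or_isSuccLimit β with rfl | ⟨γ, rfl⟩ | hl
    · exact absurd h (not_lt_zero (a := α))
    · have hγ : γ < Order.succ γ := Order.lt_succ γ
      have hαγ : α ≤ γ := Order.lt_succ_iff.1 h
      have h1 : dseq f G P0 (γ + 1) i ≤ dseq f G P0 γ i := dseq_succ_le f G P0 γ i
      rw [Ordinal.add_one_eq_succ] at h1
      exact le_trans h1 (ihβ γ hγ α hαγ i)
    · rw [dseq_limit f G P0 hl i]
      exact sInf_le ⟨α, h, rfl⟩

/-- If a step is nontrivial, pick an agent and pair witnessing strict refinement. -/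
theorem dseq_anti {α β : Ordinal.{v}} (hαβ : α ≤ β) (i : I) :
    dseq f G P0 β i ≤ dseq f G P0 α i := dseq_anti' f G P0 β α hαβ i

theorem exists_split {β : Ordinal.{v}} (hne : dseq f G P0 (β + 1) ≠ dseq f G P0 β) :
    ∃ p : I × X × X, (dseq f G P0 β p.1).r p.2.1 p.2.2 ∧
      ¬ (dseq f G P0 (β + 1) p.1).r p.2.1 p.2.2 := by
  have hne' : ∃ i, dseq f G P0 (β + 1) i ≠ dseq f G P0 β i := by
    by_contra hc
    push_neg at hc
    exact hne (funext hc)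
  obtain ⟨i, hi⟩ := hne'
  have hle := dseq_succ_le f G P0 β i
  by_contra hc
  push_neg at hc
  apply hi
  apply le_antisymm hle
  intro x y hxy
  by_contra hxy'
  exact hxy' (hc ⟨i, x, y⟩ hxy)

/-- The splitting data is injective across steps. -/
theorem split_inj {t : Set Ordinal.{v}} (ht : ∀ β ∈ t, dseq f G P0 (β + 1) ≠ dseq f G P0 β) :
    ∃ F : t → I × X × X, Function.Injective F := by
  have hch : ∀ b : t, ∃ p : I × X × X, (dseq f G P0 b.1 p.1).r p.2.1 p.2.2 ∧
      ¬ (dseq f G P0 (b.1 + 1) p.1).r p.2.1 p.2.2 :=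
    fun b => exists_split f G P0 (ht b.1 b.2)
  choose F hF1 hF2 using hch
  refine ⟨F, fun b b' hbb => ?_⟩
  by_contra hne
  have hlt : b.1 < b'.1 ∨ b'.1 < b.1 := by
    rcases lt_trichotomy b.1 b'.1 with h | h | h
    · exact Or.inl h
    · exact absurd (Subtype.ext h) hne
    · exact Or.inr h
  rcases hlt with h | h
  · have hmono : dseq f G P0 b'.1 (F b).1 ≤ dseq f G P0 (b.1 + 1) (F b).1 :=
      dseq_anti f G P0 ((by rw [Ordinal.add_one_eq_succ]; exact Order.succ_le_iff.2 h)) _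
    have := hF1 b'
    rw [← hbb] at this
    exact hF2 b (hmono this)
  · have hmono : dseq f G P0 b.1 (F b').1 ≤ dseq f G P0 (b'.1 + 1) (F b').1 :=
      dseq_anti f G P0 ((by rw [Ordinal.add_one_eq_succ]; exact Order.succ_le_iff.2 h)) _
    have := hF1 b
    rw [hbb] at this
    exact hF2 b' (hmono this)

end Seq


section Fix
open Cardinal
universe v
variable {X A I : Type v}

theorem fixedpoint_consensus [Fintype I] (hn : 2 ≤ Fintype.card I) [Nonempty X]
    (f : Set X → A) (hstp : STPred f) (G G' : I → I → Prop)
    (hsub : ∀ i j, G' i j → G i j) (hsymm : ∀ i j, G' i j → G' j i)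
    (hconn : ∀ i j : I, i ≠ j → Relation.TransGen G' i j)
    (P : I → Setoid X) (hfix : update f G P = P) :
    ∀ i j, msg f (P i) = msg f (P j) := by
  have hsend : ∀ i : I, ∃ j, G j i := by
    intro i
    obtain ⟨j, hj⟩ := Fintype.exists_ne_of_one_lt_card (lt_of_lt_of_le one_lt_two hn) i
    have htg := hconn j i hj
    cases htg with
    | single h => exact ⟨j, hsub _ _ h⟩
    | tail _ h => exact ⟨_, hsub _ _ h⟩
  have key : ∀ i j, G j i → P i ≤ wp f (P j) := by
    intro i j hji
    have h1 : update f G P i = P i := congrFun hfix i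
    unfold update at h1
    rw [if_pos (hsend i)] at h1
    calc P i = ⨅ k ∈ {k | G k i}, (P i ⊓ wp f (P k)) := h1.symm
    _ ≤ P i ⊓ wp f (P j) := le_trans (iInf_le _ j) (iInf_le _ hji)
    _ ≤ wp f (P j) := inf_le_right
  have edge : ∀ a b, G' a b → msg f (P a) = msg f (P b) := by
    intro a b hab
    exact consensus_pair f hstp (P a) (P b)
      (key a b (hsub _ _ (hsymm _ _ hab))) (key b a (hsub _ _ hab))
  intro i j
  rcases eq_or_ne i j with rfl | hij
  · rfl
  · have ht := hconn i j hij
    clear hij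
    induction ht with
    | single h => exact edge _ _ h
    | tail _ h ih => exact ih.trans (edge _ _ h)

theorem quot_card_lt [Finite X] {P Q : Setoid X} (hle : P ≤ Q) (hne : P ≠ Q) :
    Nat.card (Quotient Q) < Nat.card (Quotient P) := by
  classical
  letI := Fintype.ofFinite X
  letI : Fintype (Quotient P) := Fintype.ofFinite _
  letI : Fintype (Quotient Q) := Fintype.ofFinite _
  rw [Nat.card_eq_fintype_card, Nat.card_eq_fintype_card]
  set h : Quotient P → Quotient Q :=
    fun q => Quotient.liftOn q (fun a => @Quotient.mk _ Q a)
      (fun a b hab => Quotient.sound (hle hab)) with hh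
  have hsurj : Function.Surjective h := fun q =>
    Quotient.inductionOn q fun a => ⟨@Quotient.mk _ P a, rfl⟩
  have hninj : ¬ Function.Injective h := by
    intro hinj
    apply hne
    apply Setoid.ext
    intro a b
    constructor
    · exact fun hpab => hle hpab
    · intro hqab
      have : h (@Quotient.mk _ P a) = h (@Quotient.mk _ P b) := Quotient.sound hqab
      exact Quotient.exact (hinj this)
  exact Fintype.card_lt_of_surjective_not_injective h hsurj hninj

theorem quot_card_le [Finite X] {P Q : Setoid X} (hle : P ≤ Q) :
    Nat.card (Quotient Q) ≤ Nat.card (Quotient P) := by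
  refine Nat.card_le_card_of_surjective
    (fun q => Quotient.liftOn q (fun a => @Quotient.mk _ Q a)
      (fun a b hab => Quotient.sound (hle hab))) ?_
  exact fun q => Quotient.inductionOn q fun a => ⟨@Quotient.mk _ P a, rfl⟩

theorem card_le_of_inj {Y : Type v} {o : Ordinal.{v}} (F : Set.Iio o → Y)
    (hF : Function.Injective F) : o.card ≤ Cardinal.mk Y := by
  have h1 : Cardinal.lift.{v} #(Set.Iio o) ≤ Cardinal.lift.{v+1} #Y :=
    Cardinal.lift_mk_le'.mpr ⟨⟨F, hF⟩⟩
  rw [Ordinal.mk_Iio_ordinal, Cardinal.lift_lift] at h1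
  exact (Cardinal.lift_le.mp h1)

end Fix


section FinCase
open Cardinal
universe v
variable {X A I : Type v}

theorem split_inj_fin [Finite X] [Nonempty X] (f : Set X → A) (G : I → I → Prop)
    (P0 : I → Setoid X) {t : Set Ordinal.{v}}
    (ht : ∀ β ∈ t, dseq f G P0 (β + 1) ≠ dseq f G P0 β) :
    ∃ F : t → I × Fin (Nat.card X), Function.Injective F := by
  have hch : ∀ b : t, ∃ i : I, dseq f G P0 (b.1 + 1) i ≠ dseq f G P0 b.1 i := by
    intro b
    by_contra hc
    push_neg at hc
    exact ht b.1 b.2 (funext hc)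
  choose i hi using hch
  set k : t → ℕ := fun b => Nat.card (Quotient (dseq f G P0 b.1 (i b))) with hk
  have hne : ∀ (b : t) (j : I), Nonempty (Quotient (dseq f G P0 b.1 j)) :=
    fun b j => ⟨@Quotient.mk _ (dseq f G P0 b.1 j) (Classical.arbitrary X)⟩
  have hk1 : ∀ b, 1 ≤ k b := fun b => (hne b (i b)).elim fun q => Nat.card_pos
  have hkX : ∀ b, k b ≤ Nat.card X := by
    intro b
    refine Nat.card_le_card_of_surjective (@Quotient.mk _ (dseq f G P0 b.1 (i b))) ?_
    exact fun q => Quotient.inductionOn q fun a => ⟨a, rfl⟩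
  have hXpos : 1 ≤ Nat.card X := Nat.card_pos
  have hmono : ∀ b b' : t, b.1 < b'.1 → i b = i b' → k b < k b' := by
    intro b b' hlt hieq
    have hle1 : dseq f G P0 (b.1 + 1) (i b) ≤ dseq f G P0 b.1 (i b) :=
      dseq_succ_le f G P0 b.1 (i b)
    have h1 : Nat.card (Quotient (dseq f G P0 b.1 (i b))) <
        Nat.card (Quotient (dseq f G P0 (b.1 + 1) (i b))) :=
      quot_card_lt hle1 (hi b)
    have hsucc : b.1 + 1 ≤ b'.1 := by
      rw [Ordinal.add_one_eq_succ]; exact Order.succ_le_iff.2 hlt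
    have h2 : Nat.card (Quotient (dseq f G P0 (b.1 + 1) (i b))) ≤
        Nat.card (Quotient (dseq f G P0 b'.1 (i b))) :=
      quot_card_le (dseq_anti f G P0 hsucc (i b))
    have : k b < Nat.card (Quotient (dseq f G P0 b'.1 (i b))) := lt_of_lt_of_le h1 h2
    rw [hk]
    simpa [← hieq] using this
  refine ⟨fun b => (i b, ⟨k b - 1, by have := hk1 b; have := hkX b; omega⟩), ?_⟩
  intro b b' heq
  have hieq : i b = i b' := congrArg Prod.fst heq
  have hkeq : k b - 1 = k b' - 1 := congrArg (fun p => (Prod.snd p).1) heq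
  have hkk : k b = k b' := by have := hk1 b; have := hk1 b'; omega
  rcases lt_trichotomy b.1 b'.1 with h | h | h
  · exact absurd hkk (ne_of_lt (hmono b b' h hieq))
  · exact Subtype.ext h
  · exact absurd hkk.symm (ne_of_lt (hmono b' b h hieq.symm))

end FinCase

universe u

/-- Main theorem: Under like-mindedness (built into `msg`), the STP, and
a strongly connected symmetric spanning subgraph, the transfinite dialogue starting
from any initial profile (iterating `update`, taking joins — `sInf` in the `Setoid`
order — at limit ordinals) exists, reaches a consensus at some stage, and the least
ordinal `α*` at which the sequence stabilizes satisfies `|α*| ≤ n·|X|`. -/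
theorem stmt_12 {X : Type u} {A I : Type u} [Fintype I] (hn : 2 ≤ Fintype.card I)
    [Nonempty X] (f : Set X → A) (hstp : STPred f)
    (G G' : I → I → Prop) (hsub : ∀ i j, G' i j → G i j)
    (hsymm : ∀ i j, G' i j → G' j i)
    (hconn : ∀ i j : I, i ≠ j → Relation.TransGen G' i j)
    (P0 : I → Setoid X) :
    ∃ seq : Ordinal.{u} → (I → Setoid X),
      seq 0 = P0 ∧
      (∀ α, seq (α + 1) = update f G (seq α)) ∧
      (∀ l : Ordinal.{u}, Order.IsSuccLimit l →
        ∀ i, seq l i = sInf ((fun β => seq β i) '' Set.Iio l)) ∧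
      (∃ α : Ordinal.{u}, ∀ i j, msg f (seq α i) = msg f (seq α j)) ∧
      (sInf {α : Ordinal.{u} | seq (α + 1) = seq α}).card ≤
        (Fintype.card I : Cardinal.{u}) * Cardinal.mk X := by
  refine ⟨dseq f G P0, dseq_zero f G P0, fun α => dseq_succ f G P0 α,
    fun l hl i => dseq_limit f G P0 hl i, ?_⟩
  set S := {α : Ordinal.{u} | dseq f G P0 (α + 1) = dseq f G P0 α} with hS
  have hSne : S.Nonempty := by
    by_contra hSe
    have hall : ∀ β, dseq f G P0 (β + 1) ≠ dseq f G P0 β := fun β h => hSe ⟨β, h⟩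
    obtain ⟨F, hF⟩ := split_inj f G P0
      (t := Set.Iio (Order.succ (Cardinal.mk (I × X × X))).ord) (fun β _ => hall β)
    have h1 := card_le_of_inj F hF
    rw [Cardinal.card_ord] at h1
    exact absurd h1 (not_le.mpr (Order.lt_succ _))
  have hmem : sInf S ∈ S := csInf_mem hSne
  have hfix : update f G (dseq f G P0 (sInf S)) = dseq f G P0 (sInf S) := by
    rw [← dseq_succ]; exact hmem
  refine ⟨⟨sInf S, fixedpoint_consensus hn f hstp G G' hsub hsymm hconn _ hfix⟩, ?_⟩
  have hstrict : ∀ β ∈ Set.Iio (sInf S), dseq f G P0 (β + 1) ≠ dseq f G P0 β := by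
    intro β hβ h
    have hβS : β ∈ S := h
    have h2 : sInf S ≤ β := csInf_le' hβS
    exact absurd h2 (not_le.mpr hβ)
  have hI : (Cardinal.mk I) = (Fintype.card I : Cardinal.{u}) := Cardinal.mk_fintype I
  cases finite_or_infinite X with
  | inl hfin =>
    obtain ⟨F, hF⟩ := split_inj_fin f G P0 hstrict
    have h1 := card_le_of_inj F hF
    have h2 : Cardinal.mk (I × Fin (Nat.card X)) =
        (Fintype.card I : Cardinal.{u}) * Cardinal.mk X := by
      letI := Fintype.ofFinite X
      simp [Cardinal.mk_prod, Cardinal.mk_fin, Cardinal.lift_uzero, Cardinal.lift_natCast,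
        Nat.card_eq_fintype_card, Cardinal.mk_fintype]
    rw [h2] at h1
    exact h1
  | inr hinf =>
    obtain ⟨F, hF⟩ := split_inj f G P0 hstrict
    have h1 := card_le_of_inj F hF
    have h2 : Cardinal.mk (I × X × X) = (Fintype.card I : Cardinal.{u}) * Cardinal.mk X := by
      rw [Cardinal.mk_prod, Cardinal.mk_prod, Cardinal.lift_id, Cardinal.lift_id,
        Cardinal.lift_id, Cardinal.mul_eq_self (Cardinal.aleph0_le_mk X), hI]
    rw [h2] at h1
    exact h1
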